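/- arXiv:1604.00621 — 2 statements merged into one kernel-verified Lean document; each statement's English description precedes it below -/
import Mathlib

section
/- (Theorem 3.1, existence and strong-coupling convergence.) Suppose E[V − τ] < 0 and P( sup_{j≥1} S_j ≤ 0 ) > 0. Then there exists a measurable U : Ω → [0,∞) satisfying U ∘ θ = φ(U(·), ·) P-a.s., such that for every measurable W : Ω → [0,∞) the sequence Z_n^W converges with strong coupling to (U ∘ θ^n): P-a.s. there exists N ∈ ℕ with Z_n^W(ω) = U(θ^n ω) for all n ≥ N, where Z_0^W = W and Z_{n+1}^W(ω) = φ( Z_n^W(ω), θ^n ω ). -/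
open MeasureTheory Filter

noncomputable section

variable {Ω : Type*}

/-- ψ(y, ω) = max( max( y + V ω, σ ω + D ω + V ω ) − τ ω, 0 ). -/
def psi (σ D V τ : Ω → ℝ) (y : ℝ) (ω : Ω) : ℝ :=
  max (max (y + V ω) (σ ω + D ω + V ω) - τ ω) 0

/-- φ(x, ω): the one-step workload map, defined by its four cases:
x + σ − τ if x + σ − τ > 0 and x ≤ D; x − τ if x − τ > 0 and x > D;
max(x + σ + V − τ, 0) if x + σ − τ ≤ 0 and x ≤ D; 0 if x − τ ≤ 0 and x > D. -/
def phi (σ D V τ : Ω → ℝ) (x : ℝ) (ω : Ω) : ℝ :=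
  if x ≤ D ω then
    if 0 < x + σ ω - τ ω then x + σ ω - τ ω else max (x + σ ω + V ω - τ ω) 0
  else
    if 0 < x - τ ω then x - τ ω else 0

/-- S_j(ω) = σ(θ^{-j}ω) + D(θ^{-j}ω) + Σ_{i=1}^{j} V(θ^{-i}ω) − Σ_{i=1}^{j} τ(θ^{-i}ω),
where `θi` denotes the inverse of `θ`. -/
def Sj (θi : Ω → Ω) (σ D V τ : Ω → ℝ) (j : ℕ) (ω : Ω) : ℝ :=
  σ (θi^[j] ω) + D (θi^[j] ω)
    + ∑ i ∈ Finset.Icc 1 j, V (θi^[i] ω)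
    - ∑ i ∈ Finset.Icc 1 j, τ (θi^[i] ω)

/-- M_∞ = max(0, sup_{j ≥ 1} S_j) ∈ [0,∞]. -/
def Minf (θi : Ω → Ω) (σ D V τ : Ω → ℝ) (ω : Ω) : EReal :=
  max 0 (⨆ j : ℕ, ((Sj θi σ D V τ (j + 1) ω : ℝ) : EReal))

/-- The workload sequence Z_0^W = W, Z_{n+1}^W(ω) = φ(Z_n^W(ω), θⁿω). -/
def Zseq (θf : Ω → Ω) (σ D V τ : Ω → ℝ) (W : Ω → ℝ) : ℕ → Ω → ℝ
  | 0 => W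
  | n + 1 => fun ω => phi σ D V τ (Zseq θf σ D V τ W n ω) (θf^[n] ω)

/-- The majorizing sequence Y_0^Y = Y, Y_{n+1}^Y(ω) = ψ(Y_n^Y(ω), θⁿω). -/
def Yseq (θf : Ω → Ω) (σ D V τ : Ω → ℝ) (Y : Ω → ℝ) : ℕ → Ω → ℝ
  | 0 => Y
  | n + 1 => fun ω => psi σ D V τ (Yseq θf σ D V τ Y n ω) (θf^[n] ω)

section Aux

variable (σ D V τ : Ω → ℝ)

lemma phi_nonneg (x : ℝ) (ω : Ω) : 0 ≤ phi σ D V τ x ω := by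
  unfold phi; split_ifs <;> simp_all <;> linarith

lemma psi_eq (y : ℝ) (ω : Ω) :
    psi σ D V τ y ω = max (y + V ω - τ ω) (max (σ ω + D ω + V ω - τ ω) 0) := by
  unfold psi; rw [← max_sub_sub_right, max_assoc]

lemma phi_le_psi {x y : ℝ} (ω : Ω) (hσ : 0 ≤ σ ω) (hD : 0 ≤ D ω) (hV : 0 ≤ V ω)
    (hxy : x ≤ y) : phi σ D V τ x ω ≤ psi σ D V τ y ω := by
  rw [psi_eq]; unfold phi
  split_ifs with h1 h2 h3
  · exact le_max_of_le_right (le_max_of_le_left (by linarith))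
  · exact max_le (le_max_of_le_right (le_max_of_le_left (by linarith)))
      (le_max_of_le_right (le_max_right _ _))
  · exact le_max_of_le_left (by linarith)
  · exact le_max_of_le_right (le_max_right _ _)

lemma Zseq_nonneg (f : Ω → Ω) (W : Ω → ℝ) (hW : ∀ ω, 0 ≤ W ω) (n : ℕ) (ω : Ω) :
    0 ≤ Zseq f σ D V τ W n ω := by
  cases n with
  | zero => exact hW ω
  | succ n => exact phi_nonneg σ D V τ _ _

lemma Zseq_congr (f : Ω → Ω) {W W' : Ω → ℝ} (n : ℕ) {ω : Ω} (h : W ω = W' ω) :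
    Zseq f σ D V τ W n ω = Zseq f σ D V τ W' n ω := by
  induction n with
  | zero => exact h
  | succ n ih => simp only [Zseq, ih]

lemma Zseq_le_Yseq (f : Ω → Ω) (W : Ω → ℝ)
    (hσ0 : ∀ ω, 0 ≤ σ ω) (hD0 : ∀ ω, 0 ≤ D ω) (hV0 : ∀ ω, 0 ≤ V ω)
    (n : ℕ) (ω : Ω) : Zseq f σ D V τ W n ω ≤ Yseq f σ D V τ W n ω := by
  induction n with
  | zero => exact le_rfl
  | succ n ih => exact phi_le_psi σ D V τ _ (hσ0 _) (hD0 _) (hV0 _) ih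

lemma Zseq_add (f : Ω → Ω) (W : Ω → ℝ) (m k : ℕ) (x : Ω) :
    Zseq f σ D V τ W (m + k) x
      = Zseq f σ D V τ (fun _ => Zseq f σ D V τ W m x) k (f^[m] x) := by
  induction k with
  | zero => rfl
  | succ k ih =>
      have hit : f^[m + k] x = f^[k] (f^[m] x) := by
        rw [add_comm, Function.iterate_add_apply]
      show phi σ D V τ (Zseq f σ D V τ W (m + k) x) (f^[m + k] x) = _
      rw [ih, hit]; rfl

lemma Sj_succ [MeasurableSpace Ω] (θ : Ω ≃ᵐ Ω) (j : ℕ) (ω : Ω) :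
    Sj (⇑θ.symm) σ D V τ (j + 1) (θ ω) = Sj (⇑θ.symm) σ D V τ j ω + V ω - τ ω := by
  have hit : ∀ k : ℕ, (⇑θ.symm)^[k + 1] (θ ω) = (⇑θ.symm)^[k] ω := by
    intro k
    rw [Function.iterate_succ_apply, θ.symm_apply_apply]
  have hsum : ∀ h : Ω → ℝ,
      ∑ i ∈ Finset.Icc 1 (j + 1), h ((⇑θ.symm)^[i] (θ ω))
        = h ω + ∑ i ∈ Finset.Icc 1 j, h ((⇑θ.symm)^[i] ω) := by
    intro h
    induction j with
    | zero => simp [hit 0]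
    | succ j ih =>
        rw [Finset.sum_Icc_succ_top (by omega), ih, Finset.sum_Icc_succ_top (by omega),
          hit (j + 1)]
        ring
  unfold Sj
  rw [hit j, hsum V, hsum τ]
  ring

end Aux

section Aux2

variable [MeasurableSpace Ω] (σ D V τ : Ω → ℝ) (θ : Ω ≃ᵐ Ω)

/-- partial sums of V - τ along the forward orbit -/
def Tn (θf : Ω → Ω) (V τ : Ω → ℝ) (n : ℕ) (ω : Ω) : ℝ :=
  ∑ i ∈ Finset.range n, (V (θf^[i] ω) - τ (θf^[i] ω))

lemma Yseq_succ (f : Ω → Ω) (W : Ω → ℝ) (n : ℕ) (ω : Ω) :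
    Yseq f σ D V τ W (n + 1) ω
      = max (Yseq f σ D V τ W n ω + V (f^[n] ω) - τ (f^[n] ω))
          (max (σ (f^[n] ω) + D (f^[n] ω) + V (f^[n] ω) - τ (f^[n] ω)) 0) := by
  show psi σ D V τ _ _ = _
  rw [psi_eq]

lemma Yseq_split (f : Ω → Ω) (W : Ω → ℝ) (n : ℕ) (ω : Ω) :
    Yseq f σ D V τ W n ω
      ≤ max (W ω + Tn f V τ n ω) (Yseq f σ D V τ (fun _ => 0) n ω) := by
  induction n with
  | zero =>
      simp [Yseq, Tn]
  | succ n ih =>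
      rw [Yseq_succ, Yseq_succ]
      have hT : Tn f V τ (n + 1) ω = Tn f V τ n ω + (V (f^[n] ω) - τ (f^[n] ω)) := by
        unfold Tn; rw [Finset.sum_range_succ]
      rw [hT]
      apply max_le
      · rcases le_max_iff.1 ih with h | h
        · exact le_max_of_le_left (by linarith)
        · exact le_max_of_le_right (le_max_of_le_left (by linarith))
      · exact le_max_of_le_right (le_max_right _ _)

lemma Yseq_zero_le_fold (hσ0 : ∀ ω, 0 ≤ σ ω) (hD0 : ∀ ω, 0 ≤ D ω) (n : ℕ) (ω : Ω) :
    Yseq (⇑θ) σ D V τ (fun _ => 0) n ω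
      ≤ (Finset.Icc 1 n).fold max 0 (fun j => Sj (⇑θ.symm) σ D V τ j ((⇑θ)^[n] ω)) := by
  induction n with
  | zero => simp [Yseq]
  | succ n ih =>
      set g : ℝ := V ((⇑θ)^[n] ω) - τ ((⇑θ)^[n] ω) with hg
      have hS1 : Sj (⇑θ.symm) σ D V τ 1 ((⇑θ)^[n+1] ω)
          = σ ((⇑θ)^[n] ω) + D ((⇑θ)^[n] ω) + g := by
        rw [Function.iterate_succ_apply']
        have := Sj_succ σ D V τ θ 0 ((⇑θ)^[n] ω)
        simp [Sj] at this ⊢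
        linarith
      have hSsucc : ∀ j : ℕ, Sj (⇑θ.symm) σ D V τ (j + 1) ((⇑θ)^[n+1] ω)
          = Sj (⇑θ.symm) σ D V τ j ((⇑θ)^[n] ω) + g := by
        intro j
        rw [Function.iterate_succ_apply']
        have := Sj_succ σ D V τ θ j ((⇑θ)^[n] ω)
        linarith
      set M' : ℝ := (Finset.Icc 1 (n+1)).fold max 0
        (fun j => Sj (⇑θ.symm) σ D V τ j ((⇑θ)^[n+1] ω)) with hM'
      have h0 : (0:ℝ) ≤ M' := (Finset.le_fold_max _).2 (Or.inl le_rfl)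
      have hmem1 : (1:ℕ) ∈ Finset.Icc 1 (n+1) := Finset.mem_Icc.2 ⟨le_rfl, by omega⟩
      have hS1M : Sj (⇑θ.symm) σ D V τ 1 ((⇑θ)^[n+1] ω) ≤ M' :=
        (Finset.le_fold_max _).2 (Or.inr ⟨1, hmem1, le_rfl⟩)
      have hgM : g ≤ M' := by
        have := hσ0 ((⇑θ)^[n] ω); have := hD0 ((⇑θ)^[n] ω)
        rw [hS1] at hS1M; linarith
      have hMg : (Finset.Icc 1 n).fold max 0
          (fun j => Sj (⇑θ.symm) σ D V τ j ((⇑θ)^[n] ω)) + g ≤ M' := by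
        rw [← sub_nonneg] at hgM
        have : (Finset.Icc 1 n).fold max 0
            (fun j => Sj (⇑θ.symm) σ D V τ j ((⇑θ)^[n] ω)) ≤ M' - g := by
          refine (Finset.fold_max_le _).2 ⟨by linarith, fun j hj => ?_⟩
          obtain ⟨hj1, hj2⟩ := Finset.mem_Icc.1 hj
          have hmem : j + 1 ∈ Finset.Icc 1 (n+1) := Finset.mem_Icc.2 ⟨by omega, by omega⟩
          have hle : Sj (⇑θ.symm) σ D V τ (j+1) ((⇑θ)^[n+1] ω) ≤ M' :=
            (Finset.le_fold_max _).2 (Or.inr ⟨j+1, hmem, le_rfl⟩)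
          rw [hSsucc j] at hle; linarith
        linarith
      rw [Yseq_succ]
      apply max_le
      · have := ih; linarith
      · apply max_le _ h0
        rw [hS1] at hS1M; linarith

lemma Yseq_zero_nonpos (hσ0 : ∀ ω, 0 ≤ σ ω) (hD0 : ∀ ω, 0 ≤ D ω) (n : ℕ) (ω : Ω)
    (hA : ∀ j : ℕ, Sj (⇑θ.symm) σ D V τ (j+1) ((⇑θ)^[n] ω) ≤ 0) :
    Yseq (⇑θ) σ D V τ (fun _ => 0) n ω ≤ 0 := by
  refine (Yseq_zero_le_fold σ D V τ θ hσ0 hD0 n ω).trans ?_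
  refine (Finset.fold_max_le _).2 ⟨le_rfl, fun j hj => ?_⟩
  obtain ⟨hj1, _⟩ := Finset.mem_Icc.1 hj
  obtain ⟨j', rfl⟩ : ∃ j', j = j' + 1 := ⟨j - 1, by omega⟩
  exact hA j'

def hatZ (θ : Ω ≃ᵐ Ω) (σ D V τ : Ω → ℝ) (n : ℕ) (ω : Ω) : ℝ :=
  Zseq (⇑θ) σ D V τ (fun _ => 0) n ((⇑θ.symm)^[n] ω)

def Ufn (θ : Ω ≃ᵐ Ω) (σ D V τ : Ω → ℝ) (ω : Ω) : ℝ :=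
  (Filter.liminf (fun n => ENNReal.ofReal (hatZ θ σ D V τ n ω)) Filter.atTop).toReal

lemma hatZ_nonneg (n : ℕ) (ω : Ω) : 0 ≤ hatZ θ σ D V τ n ω :=
  Zseq_nonneg σ D V τ (⇑θ) _ (fun _ => le_rfl) n _

lemma Ufn_nonneg (ω : Ω) : 0 ≤ Ufn θ σ D V τ ω := ENNReal.toReal_nonneg

lemma hatZ_stab (hσ0 : ∀ ω, 0 ≤ σ ω) (hD0 : ∀ ω, 0 ≤ D ω) (hV0 : ∀ ω, 0 ≤ V ω)
    (m : ℕ) (ω : Ω)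
    (hA : ∀ j : ℕ, Sj (⇑θ.symm) σ D V τ (j+1) ((⇑θ.symm)^[m] ω) ≤ 0) :
    ∀ n, m ≤ n → hatZ θ σ D V τ n ω = hatZ θ σ D V τ m ω := by
  intro n hmn
  obtain ⟨k, rfl⟩ := Nat.exists_eq_add_of_le hmn
  show Zseq (⇑θ) σ D V τ (fun _ => 0) (m + k) ((⇑θ.symm)^[m + k] ω) = _
  rw [add_comm m k]
  set x := (⇑θ.symm)^[k + m] ω with hxdef
  have hx : (⇑θ)^[k] x = (⇑θ.symm)^[m] ω := by
    rw [hxdef, Function.iterate_add_apply]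
    exact Function.LeftInverse.iterate θ.apply_symm_apply k _
  have hz : Zseq (⇑θ) σ D V τ (fun _ => 0) k x = 0 := by
    apply le_antisymm
    · refine (Zseq_le_Yseq σ D V τ (⇑θ) _ hσ0 hD0 hV0 k x).trans
        (Yseq_zero_nonpos σ D V τ θ hσ0 hD0 k x ?_)
      intro j; rw [hx]; exact hA j
    · exact Zseq_nonneg σ D V τ (⇑θ) _ (fun _ => le_rfl) k x
  rw [Zseq_add σ D V τ (⇑θ) (fun _ => 0) k m x, hx]
  exact Zseq_congr σ D V τ (⇑θ) m (by rw [hz])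

lemma hatZ_rec (n : ℕ) (ω : Ω) :
    hatZ θ σ D V τ (n+1) (θ ω) = phi σ D V τ (hatZ θ σ D V τ n ω) ω := by
  unfold hatZ
  have h1 : (⇑θ.symm)^[n+1] (θ ω) = (⇑θ.symm)^[n] ω := by
    rw [Function.iterate_succ_apply, θ.symm_apply_apply]
  rw [h1]
  show phi σ D V τ (Zseq (⇑θ) σ D V τ (fun _ => 0) n ((⇑θ.symm)^[n] ω))
    ((⇑θ)^[n] ((⇑θ.symm)^[n] ω)) = _
  rw [Function.LeftInverse.iterate θ.apply_symm_apply n ω]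

lemma Ufn_eq_of_stab (m : ℕ) (ω : Ω)
    (h : ∀ n, m ≤ n → hatZ θ σ D V τ n ω = hatZ θ σ D V τ m ω) :
    Ufn θ σ D V τ ω = hatZ θ σ D V τ m ω := by
  unfold Ufn
  have hev : (fun n => ENNReal.ofReal (hatZ θ σ D V τ n ω))
      =ᶠ[Filter.atTop] (fun _ => ENNReal.ofReal (hatZ θ σ D V τ m ω)) :=
    Filter.eventually_atTop.2 ⟨m, fun n hn => congrArg ENNReal.ofReal (h n hn)⟩
  rw [Filter.liminf_congr hev, Filter.liminf_const,
    ENNReal.toReal_ofReal (hatZ_nonneg σ D V τ θ m ω)]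

lemma measurable_phi_comp (hσm : Measurable σ) (hDm : Measurable D) (hVm : Measurable V)
    (hτm : Measurable τ) {Z B : Ω → Ω → ℝ} : True := trivial

lemma measurable_phi_comp' (hσm : Measurable σ) (hDm : Measurable D) (hVm : Measurable V)
    (hτm : Measurable τ) {Z : Ω → ℝ} {B : Ω → Ω} (hZ : Measurable Z) (hB : Measurable B) :
    Measurable fun ω => phi σ D V τ (Z ω) (B ω) := by
  unfold phi
  refine Measurable.ite (measurableSet_le hZ (hDm.comp hB)) ?_ ?_
  · refine Measurable.ite (measurableSet_lt measurable_const
      ((hZ.add (hσm.comp hB)).sub (hτm.comp hB))) ((hZ.add (hσm.comp hB)).sub (hτm.comp hB)) ?_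
    exact (((hZ.add (hσm.comp hB)).add (hVm.comp hB)).sub (hτm.comp hB)).max measurable_const
  · exact Measurable.ite (measurableSet_lt measurable_const (hZ.sub (hτm.comp hB)))
      (hZ.sub (hτm.comp hB)) measurable_const

lemma measurable_Zseq (hσm : Measurable σ) (hDm : Measurable D) (hVm : Measurable V)
    (hτm : Measurable τ) {f : Ω → Ω} (hf : Measurable f) {W : Ω → ℝ} (hW : Measurable W)
    (n : ℕ) : Measurable (Zseq f σ D V τ W n) := by
  induction n with
  | zero => exact hW
  | succ n ih =>
      exact measurable_phi_comp' σ D V τ hσm hDm hVm hτm ih (hf.iterate n)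

lemma measurable_hatZ (hσm : Measurable σ) (hDm : Measurable D) (hVm : Measurable V)
    (hτm : Measurable τ) (n : ℕ) : Measurable (hatZ θ σ D V τ n) :=
  (measurable_Zseq σ D V τ hσm hDm hVm hτm θ.measurable measurable_const n).comp
    (θ.symm.measurable.iterate n)

lemma measurable_Ufn (hσm : Measurable σ) (hDm : Measurable D) (hVm : Measurable V)
    (hτm : Measurable τ) : Measurable (Ufn θ σ D V τ) := by
  apply Measurable.ennreal_toReal
  exact Measurable.liminf fun n =>
    ENNReal.measurable_ofReal.comp (measurable_hatZ σ D V τ θ hσm hDm hVm hτm n)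

lemma measurable_Sj (hσm : Measurable σ) (hDm : Measurable D) (hVm : Measurable V)
    (hτm : Measurable τ) (j : ℕ) : Measurable (Sj (⇑θ.symm) σ D V τ j) := by
  unfold Sj
  apply Measurable.sub
  · apply Measurable.add
    · exact (hσm.comp (θ.symm.measurable.iterate j)).add (hDm.comp (θ.symm.measurable.iterate j))
    · exact Finset.measurable_sum _ fun i _ => hVm.comp (θ.symm.measurable.iterate i)
  · exact Finset.measurable_sum _ fun i _ => hτm.comp (θ.symm.measurable.iterate i)

end Aux2

section Drift

variable [MeasurableSpace Ω]

def Rseq (f : Ω → Ω) (gg : Ω → ℝ) : ℕ → Ω → ℝ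
  | 0 => fun _ => 0
  | N + 1 => fun ω => max (gg ω + Rseq f gg N (f ω)) 0

def Sg (f : Ω → Ω) (gg : Ω → ℝ) (n : ℕ) (ω : Ω) : ℝ :=
  ∑ i ∈ Finset.range n, gg (f^[i] ω)

variable {f : Ω → Ω} {gg : Ω → ℝ}

lemma Rseq_nonneg (N : ℕ) (ω : Ω) : 0 ≤ Rseq f gg N ω := by
  cases N with
  | zero => exact le_rfl
  | succ N => exact le_max_right _ _

lemma Rseq_mono (N : ℕ) : ∀ ω : Ω, Rseq f gg N ω ≤ Rseq f gg (N + 1) ω := by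
  induction N with
  | zero => intro ω; exact Rseq_nonneg 1 ω
  | succ N ih =>
      intro ω
      exact max_le_max (by have := ih (f ω); linarith) le_rfl

lemma Sg_succ (n : ℕ) (ω : Ω) : Sg f gg (n + 1) ω = gg ω + Sg f gg n (f ω) := by
  unfold Sg
  rw [Finset.sum_range_succ']
  simp only [Function.iterate_zero_apply, Function.iterate_succ_apply]
  ring

lemma Sg_le_Rseq : ∀ (n N : ℕ), n ≤ N → ∀ ω : Ω, Sg f gg n ω ≤ Rseq f gg N ω := by
  intro n
  induction n with
  | zero => intro N _ ω; simpa [Sg] using Rseq_nonneg N ω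
  | succ n ih =>
      intro N hn ω
      obtain ⟨M, rfl⟩ : ∃ M, N = M + 1 := ⟨N - 1, by omega⟩
      rw [Sg_succ]
      have := ih M (by omega) (f ω)
      have h2 : gg ω + Sg f gg n (f ω) ≤ gg ω + Rseq f gg M (f ω) := by linarith
      exact h2.trans (le_max_left _ _)

lemma Rseq_measurable (hg : Measurable gg) (hf : Measurable f) (N : ℕ) :
    Measurable (Rseq f gg N) := by
  induction N with
  | zero => exact measurable_const
  | succ N ih => exact ((hg.add (ih.comp hf)).max measurable_const)

lemma Rseq_integrable (P : Measure Ω) [IsProbabilityMeasure P]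
    (hmp : MeasurePreserving f P P) (hg : Measurable gg) (hf : Measurable f)
    (hgi : Integrable gg P) (N : ℕ) : Integrable (Rseq f gg N) P := by
  induction N with
  | zero => exact integrable_const 0
  | succ N ih =>
      have hcomp : Integrable (fun ω => Rseq f gg N (f ω)) P := by
        have : Integrable (Rseq f gg N) (Measure.map f P) := by
          rw [hmp.map_eq]; exact ih
        exact this.comp_measurable hf
      exact (hgi.add hcomp).pos_part

lemma garsia (P : Measure Ω) [IsProbabilityMeasure P] (θ : Ω ≃ᵐ Ω)
    (hmp : MeasurePreserving (⇑θ) P P) (hg : Measurable gg)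
    (hgi : Integrable gg P) (N : ℕ) :
    0 ≤ ∫ ω in {ω | 0 < Rseq (⇑θ) gg N ω}, gg ω ∂P := by
  cases N with
  | zero => simp [Rseq]
  | succ N =>
      set E : Set Ω := {ω | 0 < Rseq (⇑θ) gg (N + 1) ω} with hE
      have hEm : MeasurableSet E :=
        measurableSet_lt measurable_const (Rseq_measurable hg θ.measurable (N + 1))
      have hRi : ∀ M, Integrable (Rseq (⇑θ) gg M) P :=
        Rseq_integrable P hmp hg θ.measurable hgi
      have hRci : ∀ M, Integrable (fun ω => Rseq (⇑θ) gg M (θ ω)) P := by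
        intro M
        have : Integrable (Rseq (⇑θ) gg M) (Measure.map (⇑θ) P) := by
          rw [hmp.map_eq]; exact hRi M
        exact this.comp_measurable θ.measurable
      have step1 : ∫ ω in E, gg ω ∂P
          = ∫ ω in E, (Rseq (⇑θ) gg (N+1) ω - Rseq (⇑θ) gg N (θ ω)) ∂P := by
        apply setIntegral_congr_fun hEm
        intro ω hω
        have h1 : 0 < Rseq (⇑θ) gg (N+1) ω := hω
        have h2 : Rseq (⇑θ) gg (N+1) ω = gg ω + Rseq (⇑θ) gg N (θ ω) := by
          show max (gg ω + Rseq (⇑θ) gg N (θ ω)) 0 = _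
          rcases max_cases (gg ω + Rseq (⇑θ) gg N (θ ω)) 0 with ⟨h, _⟩ | ⟨h, hlt⟩
          · exact h
          · exfalso; change 0 < Rseq (⇑θ) gg (N+1) ω at h1
            have : Rseq (⇑θ) gg (N+1) ω = 0 := by
              show max (gg ω + Rseq (⇑θ) gg N (θ ω)) 0 = 0; exact h
            linarith
        beta_reduce
        linarith
      have step2 : ∫ ω in E, (Rseq (⇑θ) gg (N+1) ω - Rseq (⇑θ) gg N (θ ω)) ∂P
          ≥ ∫ ω in E, (Rseq (⇑θ) gg (N+1) ω - Rseq (⇑θ) gg (N+1) (θ ω)) ∂P := by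
        apply setIntegral_mono_on
          (((hRi (N+1)).sub (hRci (N+1))).integrableOn)
          (((hRi (N+1)).sub (hRci N)).integrableOn) hEm
        intro ω _
        have := Rseq_mono (f := ⇑θ) (gg := gg) N (θ ω)
        simp only [Pi.sub_apply]
        linarith
      have step3 : ∫ ω in E, (Rseq (⇑θ) gg (N+1) ω - Rseq (⇑θ) gg (N+1) (θ ω)) ∂P
          ≥ ∫ ω, (Rseq (⇑θ) gg (N+1) ω - Rseq (⇑θ) gg (N+1) (θ ω)) ∂P := by
        have hint : Integrable (fun ω => Rseq (⇑θ) gg (N+1) ω - Rseq (⇑θ) gg (N+1) (θ ω)) P :=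
          (hRi (N+1)).sub (hRci (N+1))
        rw [← integral_add_compl hEm hint]
        have hcompl : ∫ ω in Eᶜ, (Rseq (⇑θ) gg (N+1) ω - Rseq (⇑θ) gg (N+1) (θ ω)) ∂P ≤ 0 := by
          apply setIntegral_nonpos hEm.compl
          intro ω hω
          have h1 : ¬ 0 < Rseq (⇑θ) gg (N+1) ω := hω
          have h2 := Rseq_nonneg (f := ⇑θ) (gg := gg) (N+1) ω
          have h3 := Rseq_nonneg (f := ⇑θ) (gg := gg) (N+1) (θ ω)
          linarith
        linarith
      have step4 : ∫ ω, (Rseq (⇑θ) gg (N+1) ω - Rseq (⇑θ) gg (N+1) (θ ω)) ∂P = 0 := by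
        rw [integral_sub (hRi (N+1)) (hRci (N+1))]
        have : ∫ ω, Rseq (⇑θ) gg (N+1) (θ ω) ∂P = ∫ ω, Rseq (⇑θ) gg (N+1) ω ∂P :=
          hmp.integral_comp θ.measurableEmbedding _
        rw [this]; ring
      linarith

lemma neg_drift (P : Measure Ω) [IsProbabilityMeasure P] (θ : Ω ≃ᵐ Ω)
    (herg : Ergodic (⇑θ) P) (hg : Measurable gg) (hgi : Integrable gg P)
    (hneg : ∫ ω, gg ω ∂P < 0) :
    ∀ᵐ ω ∂P, ∃ C : ℝ, ∀ n : ℕ, Sg (⇑θ) gg n ω ≤ C := by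
  set L : Set Ω := {ω | ∀ C : ℕ, ∃ n : ℕ, (C : ℝ) < Sg (⇑θ) gg n ω} with hL
  have hSgm : ∀ n, Measurable (Sg (⇑θ) gg n) := fun n =>
    Finset.measurable_sum _ fun i _ => hg.comp (θ.measurable.iterate i)
  have hLm : MeasurableSet L := by
    have hLe : L = ⋂ C : ℕ, ⋃ n : ℕ, {ω | (C:ℝ) < Sg (⇑θ) gg n ω} := by
      ext ω; simp [hL]
    rw [hLe]
    exact MeasurableSet.iInter fun C => MeasurableSet.iUnion fun n =>
      measurableSet_lt measurable_const (hSgm n)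
  have hinv : ⇑θ ⁻¹' L = L := by
    ext ω
    simp only [Set.mem_preimage, hL, Set.mem_setOf_eq]
    constructor
    · intro h C
      obtain ⟨C', hC'⟩ := exists_nat_ge ((C:ℝ) - gg ω)
      obtain ⟨n, hn⟩ := h C'
      exact ⟨n + 1, by rw [Sg_succ]; linarith⟩
    · intro h C
      obtain ⟨C', hC'⟩ := exists_nat_ge ((C:ℝ) + gg ω)
      obtain ⟨m, hm⟩ := h C'
      match m, hm with
      | 0, hm =>
          exfalso
          have h0 : Sg (⇑θ) gg 0 ω = 0 := by simp [Sg]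
          rw [h0] at hm
          have : (0:ℝ) ≤ (C':ℕ) := Nat.cast_nonneg _
          linarith
      | (n+1), hm => exact ⟨n, by rw [Sg_succ] at hm; linarith⟩
  rcases herg.ae_empty_or_univ hLm hinv with hres | hres
  · filter_upwards [measure_eq_zero_iff_ae_notMem.1 (ae_eq_empty.1 hres)] with ω hω
    simp only [hL, Set.mem_setOf_eq] at hω
    push_neg at hω
    obtain ⟨C, hC⟩ := hω
    exact ⟨(C:ℝ), fun n => hC n⟩
  · exfalso
    set E : ℕ → Set Ω := fun N => {ω | 0 < Rseq (⇑θ) gg N ω} with hE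
    have hEm : ∀ N, MeasurableSet (E N) := fun N =>
      measurableSet_lt measurable_const (Rseq_measurable hg θ.measurable N)
    have hmono : Monotone E := monotone_nat_of_le_succ
      (fun N ω hω => lt_of_lt_of_le hω (Rseq_mono N ω))
    have hsub : L ⊆ ⋃ N, E N := by
      intro ω hω
      obtain ⟨n, hn⟩ := hω 0
      have h0 : (0:ℝ) < Sg (⇑θ) gg n ω := by simpa using hn
      exact Set.mem_iUnion.2 ⟨n, lt_of_lt_of_le h0 (Sg_le_Rseq n n le_rfl ω)⟩
    have hPL : P L = 1 := by
      rw [measure_congr hres]; simp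
    have hPU : P (⋃ N, E N) = 1 := by
      refine le_antisymm prob_le_one ?_
      rw [← hPL]; exact measure_mono hsub
    have htend := tendsto_setIntegral_of_monotone hEm hmono hgi.integrableOn
    have hge : 0 ≤ ∫ ω in ⋃ N, E N, gg ω ∂P :=
      ge_of_tendsto' htend (fun N => garsia P θ herg.toMeasurePreserving hg hgi N)
    have hUeq : ∫ ω in ⋃ N, E N, gg ω ∂P = ∫ ω, gg ω ∂P := by
      have huniv : (⋃ N, E N) =ᵐ[P] (Set.univ : Set Ω) := by
        refine ae_eq_univ.2 ?_
        rw [prob_compl_eq_zero_iff (MeasurableSet.iUnion hEm)]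
        exact hPU
      rw [setIntegral_congr_set huniv, setIntegral_univ]
    linarith

end Drift

section Recurrence

variable [MeasurableSpace Ω]

lemma back_visit (P : Measure Ω) [IsProbabilityMeasure P] (θ : Ω ≃ᵐ Ω)
    (herg : Ergodic (⇑θ) P) {A : Set Ω} (hAm : MeasurableSet A) (hApos : 0 < P A) :
    ∀ᵐ ω ∂P, ∃ m : ℕ, (⇑θ.symm)^[m] ω ∈ A := by
  set G : Set Ω := {ω | ∃ m : ℕ, (⇑θ.symm)^[m] ω ∈ A} with hG
  have hGm : MeasurableSet G := by
    have hGe : G = ⋃ m : ℕ, (fun ω => (⇑θ.symm)^[m] ω) ⁻¹' A := by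
      ext ω; simp [hG]
    rw [hGe]
    exact MeasurableSet.iUnion fun m => (θ.symm.measurable.iterate m) hAm
  have hsub : G ⊆ ⇑θ ⁻¹' G := by
    rintro ω ⟨m, hm⟩
    exact ⟨m + 1, by rwa [Function.iterate_succ_apply, θ.symm_apply_apply]⟩
  rcases herg.ae_empty_or_univ_of_ae_le_preimage hGm.nullMeasurableSet
      (HasSubset.Subset.eventuallyLE hsub) with h | h
  · exfalso
    have hG0 : P G = 0 := ae_eq_empty.1 h
    have hA0 : P A = 0 := by
      have hsubA : A ⊆ G := by
        intro ω hω
        exact ⟨0, hω⟩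
      exact le_antisymm (le_trans (measure_mono hsubA) hG0.le) zero_le
    exact absurd hA0 (ne_of_gt hApos)
  · filter_upwards [measure_eq_zero_iff_ae_notMem.1 (ae_eq_univ.1 h)] with ω hω
    simpa [hG] using hω

lemma forward_visit (P : Measure Ω) [IsProbabilityMeasure P] (θ : Ω ≃ᵐ Ω)
    (herg : Ergodic (⇑θ) P) {A : Set Ω} (hAm : MeasurableSet A) (hApos : 0 < P A) :
    ∀ᵐ ω ∂P, ∀ N : ℕ, ∃ n : ℕ, N ≤ n ∧ (⇑θ)^[n] ω ∈ A := by
  set F : Set Ω := {ω | ∀ N : ℕ, ∃ n : ℕ, N ≤ n ∧ (⇑θ)^[n] ω ∈ A} with hF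
  have hFm : MeasurableSet F := by
    have hFe : F = ⋂ N : ℕ, ⋃ n : ℕ, ⋃ _ : N ≤ n, (fun ω => (⇑θ)^[n] ω) ⁻¹' A := by
      ext ω; simp [hF]
    rw [hFe]
    exact MeasurableSet.iInter fun N => MeasurableSet.iUnion fun n =>
      MeasurableSet.iUnion fun _ => (θ.measurable.iterate n) hAm
  have hinv : ⇑θ ⁻¹' F = F := by
    ext ω
    simp only [Set.mem_preimage, hF, Set.mem_setOf_eq]
    constructor
    · intro h N
      obtain ⟨n, hn, hmem⟩ := h N
      exact ⟨n + 1, by omega, by rwa [Function.iterate_succ_apply]⟩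
    · intro h N
      obtain ⟨n, hn, hmem⟩ := h (N + 1)
      obtain ⟨n', rfl⟩ : ∃ n', n = n' + 1 := ⟨n - 1, by omega⟩
      exact ⟨n', by omega, by rwa [Function.iterate_succ_apply] at hmem⟩
  rcases herg.ae_empty_or_univ hFm hinv with h | h
  · exfalso
    have hcons : ∀ᵐ x ∂P, x ∈ A → ∃ᶠ n in Filter.atTop, (⇑θ)^[n] x ∈ A :=
      (herg.toMeasurePreserving.conservative).ae_mem_imp_frequently_image_mem
        hAm.nullMeasurableSet
    have hnF : ∀ᵐ x ∂P, x ∉ F := measure_eq_zero_iff_ae_notMem.1 (ae_eq_empty.1 h)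
    have hA0 : ∀ᵐ x ∂P, x ∉ A := by
      filter_upwards [hcons, hnF] with x hx hxF hxA
      exact hxF (fun N => (Filter.frequently_atTop.1 (hx hxA)) N)
    exact absurd (measure_eq_zero_iff_ae_notMem.2 hA0) (ne_of_gt hApos)
  · filter_upwards [measure_eq_zero_iff_ae_notMem.1 (ae_eq_univ.1 h)] with ω hω
    simpa [hF] using hω

end Recurrence

/-- Theorem 3.1, existence and strong-coupling convergence:
if E[V − τ] < 0 and P(sup_{j≥1} S_j ≤ 0) > 0, there is a stationary solution U of
U ∘ θ = φ(U, ·) such that every workload sequence Z_n^W couples with (U ∘ θⁿ). -/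
theorem stationary_existence_strong_coupling
    [MeasurableSpace Ω] (P : Measure Ω) [IsProbabilityMeasure P]
    (θ : Ω ≃ᵐ Ω) (herg : Ergodic (⇑θ) P)
    (σ D V τ : Ω → ℝ)
    (hσm : Measurable σ) (hDm : Measurable D) (hVm : Measurable V) (hτm : Measurable τ)
    (hσ0 : ∀ ω, 0 ≤ σ ω) (hD0 : ∀ ω, 0 ≤ D ω) (hV0 : ∀ ω, 0 ≤ V ω) (hτ0 : ∀ ω, 0 ≤ τ ω)
    (hσi : Integrable σ P) (hDi : Integrable D P) (hVi : Integrable V P) (hτi : Integrable τ P)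
    (hτpos : ∀ᵐ ω ∂P, 0 < τ ω)
    (hEV : ∫ ω, (V ω - τ ω) ∂P < 0)
    (hsup : 0 < P {ω : Ω | ∀ j : ℕ, Sj (⇑θ.symm) σ D V τ (j + 1) ω ≤ 0}) :
    ∃ U : Ω → ℝ, Measurable U ∧ (∀ ω, 0 ≤ U ω) ∧
      (∀ᵐ ω ∂P, U (θ ω) = phi σ D V τ (U ω) ω) ∧
      (∀ W : Ω → ℝ, Measurable W → (∀ ω, 0 ≤ W ω) →
        ∀ᵐ ω ∂P, ∃ N : ℕ, ∀ n ≥ N, Zseq (⇑θ) σ D V τ W n ω = U ((⇑θ)^[n] ω)) := by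
  classical
  set A : Set Ω := {ω : Ω | ∀ j : ℕ, Sj (⇑θ.symm) σ D V τ (j + 1) ω ≤ 0} with hAdef
  have hAm : MeasurableSet A := by
    have hAe : A = ⋂ j : ℕ, {ω | Sj (⇑θ.symm) σ D V τ (j+1) ω ≤ 0} := by
      ext ω; simp [hAdef]
    rw [hAe]
    exact MeasurableSet.iInter fun j =>
      measurableSet_le (measurable_Sj σ D V τ θ hσm hDm hVm hτm (j+1)) measurable_const
  -- pointwise functional equation on the backward-visit set
  have hfe : ∀ ω', (∃ m : ℕ, (⇑θ.symm)^[m] ω' ∈ A) →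
      Ufn θ σ D V τ (θ ω') = phi σ D V τ (Ufn θ σ D V τ ω') ω' := by
    rintro ω' ⟨m, hm⟩
    have hstab := hatZ_stab σ D V τ θ hσ0 hD0 hV0 m ω' (fun j => hm j)
    have hUω : Ufn θ σ D V τ ω' = hatZ θ σ D V τ m ω' :=
      Ufn_eq_of_stab σ D V τ θ m ω' hstab
    have hmθ : (⇑θ.symm)^[m+1] (θ ω') ∈ A := by
      rw [Function.iterate_succ_apply, θ.symm_apply_apply]; exact hm
    have hstabθ := hatZ_stab σ D V τ θ hσ0 hD0 hV0 (m+1) (θ ω') (fun j => hmθ j)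
    have hUθ : Ufn θ σ D V τ (θ ω') = hatZ θ σ D V τ (m+1) (θ ω') :=
      Ufn_eq_of_stab σ D V τ θ (m+1) (θ ω') hstabθ
    rw [hUθ, hatZ_rec σ D V τ θ m ω', hUω]
  set Gs : Set Ω := {ω | ∃ m : ℕ, (⇑θ.symm)^[m] ω ∈ A} with hGsdef
  have hGsm : MeasurableSet Gs := by
    have hGe : Gs = ⋃ m : ℕ, (fun ω => (⇑θ.symm)^[m] ω) ⁻¹' A := by
      ext ω; simp [hGsdef]
    rw [hGe]
    exact MeasurableSet.iUnion fun m => (θ.symm.measurable.iterate m) hAm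
  have hGsae : ∀ᵐ ω ∂P, ω ∈ Gs := back_visit P θ herg hAm hsup
  have hGsc : P Gsᶜ = 0 := by
    rw [measure_eq_zero_iff_ae_notMem]
    filter_upwards [hGsae] with ω hω
    simpa using hω
  have hGorb : ∀ᵐ ω ∂P, ∀ n : ℕ, (⇑θ)^[n] ω ∈ Gs := by
    rw [ae_all_iff]
    intro n
    have hmp := herg.toMeasurePreserving.iterate n
    have hpre : P ((⇑θ)^[n] ⁻¹' Gsᶜ) = 0 := by
      rw [hmp.measure_preimage hGsm.compl.nullMeasurableSet, hGsc]
    filter_upwards [measure_eq_zero_iff_ae_notMem.1 hpre] with ω h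
    simpa using h
  refine ⟨Ufn θ σ D V τ, measurable_Ufn σ D V τ θ hσm hDm hVm hτm,
    Ufn_nonneg σ D V τ θ, ?_, ?_⟩
  · filter_upwards [hGsae] with ω hω
    exact hfe ω hω
  · intro W hWm hW0
    set c : ℝ := -(∫ ω, (V ω - τ ω) ∂P) / 2 with hc
    have hcpos : 0 < c := by rw [hc]; linarith
    set gg : Ω → ℝ := fun ω => V ω - τ ω + c with hgg
    have hggm : Measurable gg := (hVm.sub hτm).add measurable_const
    have hggi : Integrable gg P := (hVi.sub hτi).add (integrable_const c)
    have hgneg : ∫ ω, gg ω ∂P < 0 := by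
      have : ∫ ω, gg ω ∂P = (∫ ω, (V ω - τ ω) ∂P) + c := by
        simp only [hgg]
        rw [integral_add (f := fun ω => V ω - τ ω) (g := fun _ => c)
          (hVi.sub hτi) (integrable_const c), integral_const]
        simp [measure_univ]
      rw [this, hc]; linarith
    filter_upwards [neg_drift P θ herg hggm hggi hgneg,
      forward_visit P θ herg hAm hsup, hGorb] with ω hdrift hvisit hGo
    obtain ⟨C, hC⟩ := hdrift
    have hT : ∀ n : ℕ, Tn (⇑θ) V τ n ω ≤ C - n * c := by
      intro n
      have h1 := hC n
      have hSg : Sg (⇑θ) gg n ω = Tn (⇑θ) V τ n ω + n * c := by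
        show (∑ i ∈ Finset.range n, (V ((⇑θ)^[i] ω) - τ ((⇑θ)^[i] ω) + c)) = _
        rw [Finset.sum_add_distrib, Finset.sum_const, Finset.card_range]
        unfold Tn
        rw [nsmul_eq_mul]
      rw [hSg] at h1; linarith
    obtain ⟨N₀, hN₀⟩ := exists_nat_ge ((C + W ω) / c)
    obtain ⟨n₀, hn₀ge, hn₀A⟩ := hvisit N₀
    have hkey : W ω + Tn (⇑θ) V τ n₀ ω ≤ 0 := by
      have h1 : C + W ω ≤ N₀ * c := by
        rw [div_le_iff₀ hcpos] at hN₀; linarith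
      have h2 : (N₀:ℝ) * c ≤ (n₀:ℝ) * c :=
        mul_le_mul_of_nonneg_right (Nat.cast_le.2 hn₀ge) hcpos.le
      have h3 := hT n₀
      linarith
    have hZ0 : Zseq (⇑θ) σ D V τ W n₀ ω = 0 := by
      apply le_antisymm
      · refine (Zseq_le_Yseq σ D V τ (⇑θ) W hσ0 hD0 hV0 n₀ ω).trans ?_
        refine (Yseq_split σ D V τ (⇑θ) W n₀ ω).trans ?_
        apply max_le hkey
        exact Yseq_zero_nonpos σ D V τ θ hσ0 hD0 n₀ ω (fun j => hn₀A j)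
      · exact Zseq_nonneg σ D V τ (⇑θ) W hW0 n₀ ω
    have hU0 : Ufn θ σ D V τ ((⇑θ)^[n₀] ω) = 0 := by
      have hstab := hatZ_stab σ D V τ θ hσ0 hD0 hV0 0 ((⇑θ)^[n₀] ω)
        (fun j => by simpa using hn₀A j)
      rw [Ufn_eq_of_stab σ D V τ θ 0 _ hstab]
      rfl
    refine ⟨n₀, fun n hn => ?_⟩
    obtain ⟨k, rfl⟩ := Nat.exists_eq_add_of_le hn
    clear hn
    induction k with
    | zero => rw [Nat.add_zero, hZ0, hU0]
    | succ k ih =>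
        show phi σ D V τ (Zseq (⇑θ) σ D V τ W (n₀+k) ω) ((⇑θ)^[n₀+k] ω) = _
        rw [ih]
        have hstep := hfe ((⇑θ)^[n₀+k] ω) (hGo (n₀+k))
        rw [← Function.iterate_succ_apply' (⇑θ) (n₀+k) ω] at hstep
        exact hstep.symm
end
end

section
/- (Theorem 3.1, uniqueness.) Suppose E[V − τ] < 0 and P( sup_{j≥1} S_j ≤ 0 ) > 0. If X, X' : Ω → [0,∞) are measurable random variables each satisfying the stationary equation X ∘ θ = φ(X(·), ·) P-a.s. and X' ∘ θ = φ(X'(·), ·) P-a.s., then X = X' P-a.s. -/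
open MeasureTheory Filter

noncomputable section

variable {Ω : Type*}

/-! ### Auxiliary material: maximal ergodic theorem and consequences -/

/-- Running maxima `max (0, S_1, …, S_n)` of Birkhoff sums, defined recursively. -/
def runMax (T : Ω → Ω) (f : Ω → ℝ) : ℕ → Ω → ℝ
  | 0 => fun _ => 0
  | n + 1 => fun ω => max 0 (f ω + runMax T f n (T ω))

lemma runMax_nonneg (T : Ω → Ω) (f : Ω → ℝ) (n : ℕ) (ω : Ω) : 0 ≤ runMax T f n ω := by
  cases n <;> simp [runMax]

lemma runMax_mono (T : Ω → Ω) (f : Ω → ℝ) (n : ℕ) :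
    ∀ ω, runMax T f n ω ≤ runMax T f (n + 1) ω := by
  induction n with
  | zero => intro ω; exact runMax_nonneg T f 1 ω
  | succ n ih =>
      intro ω
      exact max_le_max le_rfl (by linarith [ih (T ω)])

lemma birkhoffSum_le_runMax (T : Ω → Ω) (f : Ω → ℝ) :
    ∀ n k, 1 ≤ k → k ≤ n → ∀ ω, birkhoffSum T f k ω ≤ runMax T f n ω := by
  intro n
  induction n with
  | zero => intro k h1 h2; omega
  | succ n ih =>
      intro k h1 h2 ω
      match k, h1 with
      | 1, _ =>
          rw [birkhoffSum_one]
          calc f ω ≤ f ω + runMax T f n (T ω) := by linarith [runMax_nonneg T f n (T ω)]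
            _ ≤ _ := le_max_right _ _
      | (j+2), _ =>
          rw [birkhoffSum_succ']
          have : birkhoffSum T f (j+1) (T ω) ≤ runMax T f n (T ω) :=
            ih (j+1) (by omega) (by omega) (T ω)
          calc f ω + birkhoffSum T f (j+1) (T ω) ≤ f ω + runMax T f n (T ω) := by linarith
            _ ≤ _ := le_max_right _ _

lemma runMax_cases (T : Ω → Ω) (f : Ω → ℝ) :
    ∀ n ω, runMax T f n ω = 0 ∨
      ∃ k, 1 ≤ k ∧ k ≤ n ∧ runMax T f n ω ≤ birkhoffSum T f k ω := by
  intro n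
  induction n with
  | zero => intro ω; exact Or.inl rfl
  | succ n ih =>
      intro ω
      rcases le_total (f ω + runMax T f n (T ω)) 0 with h | h
      · exact Or.inl (by simp [runMax, max_eq_left h])
      · have hval : runMax T f (n+1) ω = f ω + runMax T f n (T ω) := max_eq_right h
        rcases ih (T ω) with h0 | ⟨k, hk1, hk2, hk3⟩
        · refine Or.inr ⟨1, le_rfl, by omega, ?_⟩
          rw [birkhoffSum_one, hval, h0, add_zero]
        · refine Or.inr ⟨k + 1, by omega, by omega, ?_⟩
          rw [birkhoffSum_succ', hval]
          linarith

lemma measurable_runMax {_ : MeasurableSpace Ω} {T : Ω → Ω} {f : Ω → ℝ}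
    (hT : Measurable T) (hf : Measurable f) (n : ℕ) : Measurable (runMax T f n) := by
  induction n with
  | zero => exact measurable_const
  | succ n ih => exact measurable_const.max (hf.add (ih.comp hT))

lemma integrable_runMax {_ : MeasurableSpace Ω} {P : Measure Ω} [IsFiniteMeasure P]
    {T : Ω → Ω} {f : Ω → ℝ}
    (hTm : Measurable T) (hT : MeasurePreserving T P P) (hfm : Measurable f)
    (hfi : Integrable f P) (n : ℕ) : Integrable (runMax T f n) P := by
  induction n with
  | zero => exact integrable_const 0
  | succ n ih =>
      refine (integrable_const (0:ℝ)).sup (hfi.add ?_)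
      exact (hT.integrable_comp (measurable_runMax hTm hfm n).aestronglyMeasurable).mpr ih

/-- Garsia's maximal ergodic inequality. -/
lemma garsia_s12 {_ : MeasurableSpace Ω} {P : Measure Ω} [IsFiniteMeasure P] {T : Ω → Ω} {f : Ω → ℝ}
    (hTm : Measurable T) (hT : MeasurePreserving T P P) (hfm : Measurable f)
    (hfi : Integrable f P) (n : ℕ) :
    0 ≤ ∫ ω in {ω | 0 < runMax T f n ω}, f ω ∂P := by
  cases n with
  | zero => simp [runMax]
  | succ n =>
      set Q : Ω → ℝ := runMax T f (n+1) with hQ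
      set A : Set Ω := {ω | 0 < Q ω} with hA
      have hQm : Measurable Q := measurable_runMax hTm hfm (n+1)
      have hQi : Integrable Q P := integrable_runMax hTm hT hfm hfi (n+1)
      have hQTi : Integrable (fun ω => Q (T ω)) P :=
        (hT.integrable_comp hQm.aestronglyMeasurable).mpr hQi
      have hAm : MeasurableSet A := measurableSet_lt measurable_const hQm
      -- pointwise bound on A
      have hpt : ∀ ω ∈ A, Q ω - Q (T ω) ≤ f ω := by
        intro ω hω
        have h1 : 0 < Q ω := hω
        have h2 : Q ω = f ω + runMax T f n (T ω) := by
          rcases le_total (f ω + runMax T f n (T ω)) 0 with h | h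
          · exfalso; have : Q ω = 0 := max_eq_left h; linarith
          · exact max_eq_right h
        have h3 : runMax T f n (T ω) ≤ Q (T ω) := runMax_mono T f n (T ω)
        linarith
      have step1 : ∫ ω in A, (Q ω - Q (T ω)) ∂P ≤ ∫ ω in A, f ω ∂P :=
        setIntegral_mono_on (hQi.sub hQTi).integrableOn hfi.integrableOn hAm hpt
      have step2 : ∫ ω in A, (Q ω - Q (T ω)) ∂P
          = ∫ ω in A, Q ω ∂P - ∫ ω in A, Q (T ω) ∂P :=
        integral_sub hQi.integrableOn hQTi.integrableOn
      have step3 : ∫ ω in A, Q ω ∂P = ∫ ω, Q ω ∂P := by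
        have := integral_add_compl hAm hQi
        have hz : ∫ ω in Aᶜ, Q ω ∂P = 0 := by
          apply setIntegral_eq_zero_of_forall_eq_zero
          intro ω hω
          have h1 : ¬ (0 < Q ω) := hω
          have h2 : 0 ≤ Q ω := runMax_nonneg T f (n+1) ω
          linarith
        linarith
      have step4 : ∫ ω in A, Q (T ω) ∂P ≤ ∫ ω, Q (T ω) ∂P :=
        setIntegral_le_integral hQTi
          (Filter.Eventually.of_forall fun ω => runMax_nonneg T f (n+1) (T ω))
      have step5 : ∫ ω, Q (T ω) ∂P = ∫ ω, Q ω ∂P := by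
        calc ∫ ω, Q (T ω) ∂P = ∫ ω, Q ω ∂(Measure.map T P) :=
              (integral_map hTm.aemeasurable hQm.aestronglyMeasurable).symm
          _ = ∫ ω, Q ω ∂P := by rw [hT.map_eq]
      linarith

/-- Maximal ergodic theorem: the integral of `f` over `{sup_k S_k f > 0}` is nonnegative. -/
lemma garsia_union {_ : MeasurableSpace Ω} {P : Measure Ω} [IsProbabilityMeasure P]
    {T : Ω → Ω} {f : Ω → ℝ}
    (hTm : Measurable T) (hT : MeasurePreserving T P P) (hfm : Measurable f)
    (hfi : Integrable f P) :
    0 ≤ ∫ ω in {ω | ∃ k, 1 ≤ k ∧ 0 < birkhoffSum T f k ω}, f ω ∂P := by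
  set s : ℕ → Set Ω := fun n => {ω | 0 < runMax T f n ω} with hs
  have hsm : ∀ n, MeasurableSet (s n) := fun n =>
    measurableSet_lt measurable_const (measurable_runMax hTm hfm n)
  have hmono : Monotone s := by
    apply monotone_nat_of_le_succ
    intro n ω hω
    exact lt_of_lt_of_le hω (runMax_mono T f n ω)
  have hunion : (⋃ n, s n) = {ω | ∃ k, 1 ≤ k ∧ 0 < birkhoffSum T f k ω} := by
    ext ω
    simp only [Set.mem_iUnion, Set.mem_setOf_eq]
    constructor
    · rintro ⟨n, hn⟩
      rcases runMax_cases T f n ω with h0 | ⟨k, hk1, hk2, hk3⟩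
      · rw [hs] at hn; simp only [Set.mem_setOf_eq] at hn; rw [h0] at hn; exact absurd hn (lt_irrefl 0)
      · exact ⟨k, hk1, lt_of_lt_of_le hn hk3⟩
    · rintro ⟨k, hk1, hk2⟩
      exact ⟨k, lt_of_lt_of_le hk2 (birkhoffSum_le_runMax T f k k hk1 le_rfl ω)⟩
  have htend := tendsto_setIntegral_of_monotone hsm hmono hfi.integrableOn
  rw [hunion] at htend
  refine ge_of_tendsto' htend fun n => garsia_s12 hTm hT hfm hfi n

/-- If the mean of `f` is negative then, almost surely, the Birkhoff sums tend to `-∞`. -/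
lemma birkhoffSum_tendsto_atBot {_ : MeasurableSpace Ω} {P : Measure Ω} [IsProbabilityMeasure P]
    {T : Ω → Ω} (hTm : Measurable T) (herg : Ergodic T P) {f : Ω → ℝ}
    (hfm : Measurable f) (hfi : Integrable f P) (hneg : ∫ ω, f ω ∂P < 0) :
    ∀ᵐ ω ∂P, Tendsto (fun n => birkhoffSum T f n ω) atTop atBot := by
  have hT : MeasurePreserving T P P := herg.toMeasurePreserving
  set ε : ℝ := -(∫ ω, f ω ∂P) / 2 with hε
  have hεpos : 0 < ε := by rw [hε]; linarith
  set g : Ω → ℝ := fun ω => f ω + ε with hg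
  have hgm : Measurable g := hfm.add measurable_const
  have hgi : Integrable g P := hfi.add (integrable_const ε)
  have hgneg : ∫ ω, g ω ∂P < 0 := by
    rw [hg]
    simp only [integral_add hfi (integrable_const ε), integral_const, measure_univ,
      ENNReal.toReal_one, probReal_univ, one_smul, smul_eq_mul]
    linarith
  set Au : Set Ω := {ω | ∃ k, 1 ≤ k ∧ 0 < birkhoffSum T g k ω} with hAu
  have hAum : MeasurableSet Au := by
    have : ∀ k : ℕ, Measurable fun ω => birkhoffSum T g k ω := by
      intro k
      exact Finset.measurable_sum _ fun i _ => hgm.comp (hTm.iterate i)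
    have : Au = ⋃ k, ⋃ _ : 1 ≤ k, {ω | 0 < birkhoffSum T g k ω} := by
      ext ω; simp [hAu]
    rw [this]
    exact MeasurableSet.iUnion fun k => MeasurableSet.iUnion fun _ =>
      measurableSet_lt measurable_const (Finset.measurable_sum _ fun i _ => hgm.comp (hTm.iterate i))
  have hgar : 0 ≤ ∫ ω in Au, g ω ∂P := garsia_union hTm hT hgm hgi
  -- the complement has positive measure
  have hCpos : 0 < P Auᶜ := by
    rcases eq_or_ne (P Auᶜ) 0 with h0 | h0
    · exfalso
      have : Au =ᵐ[P] Set.univ := by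
        rw [Filter.eventuallyEq_set]
        filter_upwards [measure_eq_zero_iff_ae_notMem.mp h0] with ω hω
        simp only [Set.mem_univ, iff_true]
        by_contra hc
        exact hω hc
      have : ∫ ω in Au, g ω ∂P = ∫ ω, g ω ∂P := by
        rw [setIntegral_congr_set this, setIntegral_univ]
      linarith
    · exact lt_of_le_of_ne (zero_le) (Ne.symm h0)
  -- birkhoff sums of f decay linearly on Auᶜ
  have hbound : ∀ ω ∈ Auᶜ, ∀ k, 1 ≤ k → birkhoffSum T f k ω ≤ -(k : ℝ) * ε := by
    intro ω hω k hk
    have h1 : ¬ (0 < birkhoffSum T g k ω) := by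
      intro hc
      exact hω ⟨k, hk, hc⟩
    have h2 : birkhoffSum T g k ω = birkhoffSum T f k ω + (k : ℝ) * ε := by
      simp only [birkhoffSum, hg, Finset.sum_add_distrib, Finset.sum_const,
        Finset.card_range, nsmul_eq_mul]
    push_neg at h1
    rw [h2] at h1
    linarith
  -- the set of divergence is invariant
  set I : Set Ω := {ω | Tendsto (fun n => birkhoffSum T f n ω) atTop atBot} with hI
  have hIm : MeasurableSet I := by
    have hm : ∀ n : ℕ, Measurable fun ω => birkhoffSum T f n ω := fun n =>
      Finset.measurable_sum _ fun i _ => hfm.comp (hTm.iterate i)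
    have : I = ⋂ b : ℕ, ⋃ N : ℕ, ⋂ n : ℕ, {ω | n < N ∨ birkhoffSum T f n ω ≤ -(b:ℝ)} := by
      ext ω
      simp only [hI, Set.mem_setOf_eq, Set.mem_iInter, Set.mem_iUnion, Set.mem_setOf_eq]
      constructor
      · intro h b
        have := (tendsto_atBot.mp h) (-(b:ℝ))
        rw [eventually_atTop] at this
        obtain ⟨N, hN⟩ := this
        exact ⟨N, fun n => by
          rcases lt_or_ge n N with h' | h'
          · exact Or.inl h'
          · exact Or.inr (hN n h')⟩
      · intro h
        rw [tendsto_atBot]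
        intro b
        obtain ⟨b', hb'⟩ := exists_nat_ge (-b)
        obtain ⟨N, hN⟩ := h b'
        rw [eventually_atTop]
        refine ⟨N, fun n hn => ?_⟩
        rcases hN n with h' | h'
        · omega
        · linarith
    rw [this]
    exact MeasurableSet.iInter fun b => MeasurableSet.iUnion fun N =>
      MeasurableSet.iInter fun n => by
        rcases lt_or_ge n N with h | h
        · simp only [h, true_or]
          exact MeasurableSet.univ.congr (by ext ω; simp [h])
        · have : {ω : Ω | n < N ∨ birkhoffSum T f n ω ≤ -(b:ℝ)}
              = {ω | birkhoffSum T f n ω ≤ -(b:ℝ)} := by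
            ext ω; simp [Nat.not_lt.mpr h]
          rw [this]
          exact measurableSet_le (hm n) measurable_const
  have hinv : T ⁻¹' I = I := by
    ext ω
    simp only [Set.mem_preimage, hI, Set.mem_setOf_eq]
    have hrel : ∀ n, birkhoffSum T f (n + 1) ω = f ω + birkhoffSum T f n (T ω) := fun n =>
      birkhoffSum_succ' T f n ω
    constructor
    · intro h
      have h1 : Tendsto (fun n => f ω + birkhoffSum T f n (T ω)) atTop atBot :=
        tendsto_atBot_add_const_left atTop (f ω) h
      have h2 : Tendsto (fun n => birkhoffSum T f (n + 1) ω) atTop atBot := by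
        apply h1.congr
        intro n
        exact (hrel n).symm
      exact (tendsto_add_atTop_iff_nat 1).mp h2
    · intro h
      have h2 : Tendsto (fun n => birkhoffSum T f (n + 1) ω) atTop atBot :=
        (tendsto_add_atTop_iff_nat 1).mpr h
      have h3 : Tendsto (fun n => birkhoffSum T f (n + 1) ω - f ω) atTop atBot :=
        tendsto_atBot_add_const_right atTop (-(f ω)) h2
      apply h3.congr
      intro n
      rw [hrel n]
      ring
  rcases herg.ae_empty_or_univ hIm hinv with h | h
  · exfalso
    have hsub : Auᶜ ⊆ I := by
      intro ω hω
      simp only [hI, Set.mem_setOf_eq]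
      have hb := hbound ω hω
      have hv : Tendsto (fun k : ℕ => (k:ℝ) * (-ε)) atTop atBot :=
        Tendsto.atTop_mul_const_of_neg (by linarith) tendsto_natCast_atTop_atTop
      refine tendsto_atBot_mono' atTop ?_ hv
      rw [Filter.EventuallyLE, eventually_atTop]
      refine ⟨1, fun k hk => ?_⟩
      have := hb k hk
      linarith
    have : P I = 0 := by
      have := measure_congr h
      simpa using this
    have : P Auᶜ = 0 := le_antisymm (this ▸ measure_mono hsub) (zero_le)
    exact absurd this (ne_of_gt hCpos)
  · rw [ae_eq_univ] at h
    rw [ae_iff]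
    simpa [hI, Set.compl_setOf] using h

/-- Almost surely, the backward orbit visits any fixed positive-measure set infinitely often. -/
lemma freq_visit {_ : MeasurableSpace Ω} {P : Measure Ω} [IsProbabilityMeasure P]
    (θ : Ω ≃ᵐ Ω) (herg : Ergodic (⇑θ) P) {A : Set Ω}
    (hAm : MeasurableSet A) (hApos : 0 < P A) :
    ∀ᵐ ω ∂P, ∃ᶠ n in atTop, (⇑θ.symm)^[n] ω ∈ A := by
  have hTmp : MeasurePreserving (⇑θ.symm) P P := (herg.toMeasurePreserving).symm θ
  have hcons : Conservative (⇑θ.symm) P := hTmp.conservative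
  have hrec := hcons.ae_mem_imp_frequently_image_mem hAm.nullMeasurableSet
  set I : Set Ω := ⋂ N : ℕ, ⋃ n : ℕ, ⋃ _ : N ≤ n, (fun ω => (⇑θ.symm)^[n] ω) ⁻¹' A with hI
  have hIm : MeasurableSet I :=
    MeasurableSet.iInter fun N => MeasurableSet.iUnion fun n => MeasurableSet.iUnion fun _ =>
      hAm.preimage (θ.symm.measurable.iterate n)
  have hIfreq : ∀ ω, ω ∈ I ↔ ∃ᶠ n in atTop, (⇑θ.symm)^[n] ω ∈ A := by
    intro ω
    rw [frequently_atTop]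
    simp only [hI, Set.mem_iInter, Set.mem_iUnion, Set.mem_preimage]
    constructor
    · intro h N; obtain ⟨n, hn, h'⟩ := h N; exact ⟨n, hn, h'⟩
    · intro h N; obtain ⟨n, hn, h'⟩ := h N; exact ⟨n, hn, h'⟩
  have hinv : (⇑θ) ⁻¹' I = I := by
    ext ω
    simp only [Set.mem_preimage]
    rw [hIfreq, hIfreq, frequently_atTop, frequently_atTop]
    constructor
    · intro h N
      obtain ⟨n, hn, h'⟩ := h (N + 1)
      obtain ⟨m, rfl⟩ : ∃ m, n = m + 1 := ⟨n - 1, by omega⟩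
      refine ⟨m, by omega, ?_⟩
      have : (⇑θ.symm)^[m + 1] (θ ω) = (⇑θ.symm)^[m] ω := by
        rw [Function.iterate_succ_apply]
        simp
      rwa [this] at h'
    · intro h N
      obtain ⟨n, hn, h'⟩ := h N
      refine ⟨n + 1, by omega, ?_⟩
      have : (⇑θ.symm)^[n + 1] (θ ω) = (⇑θ.symm)^[n] ω := by
        rw [Function.iterate_succ_apply]
        simp
      rwa [this]
  rcases herg.ae_empty_or_univ hIm hinv with h | h
  · exfalso
    have hAI : ∀ᵐ ω ∂P, ω ∈ A → ω ∈ I := by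
      filter_upwards [hrec] with ω hω hmem
      rw [hIfreq]
      exact hω hmem
    have hPI : P I = 0 := by
      have := measure_congr h
      simpa using this
    have h1 : P (A \ I) = 0 := by
      rw [ae_iff] at hAI
      apply le_antisymm _ (zero_le)
      refine le_trans (measure_mono ?_) (le_of_eq hAI)
      intro ω hω
      simp only [Set.mem_setOf_eq]
      exact fun hc => hω.2 (hc hω.1)
    have : P A ≤ P (A \ I) + P I := by
      refine le_trans (measure_mono ?_) (measure_union_le _ _)
      intro ω hω
      by_cases h' : ω ∈ I
      · exact Or.inr h'
      · exact Or.inl ⟨hω, h'⟩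
    rw [h1, hPI] at this
    simp only [add_zero] at this
    exact absurd (le_antisymm this (zero_le)) (ne_of_gt hApos)
  · rw [ae_eq_univ] at h
    rw [ae_iff]
    apply le_antisymm _ (zero_le)
    refine le_trans (measure_mono ?_) (le_of_eq h)
    intro ω hω
    simp only [Set.mem_setOf_eq] at hω
    intro hc
    rw [hIfreq] at hc
    exact hω hc

lemma phi_le_psi_s12 (σ D V τ : Ω → ℝ) (hV0 : ∀ ω, 0 ≤ V ω) (x : ℝ) (ω : Ω) :
    phi σ D V τ x ω ≤ max (max (x + V ω) (σ ω + D ω + V ω) - τ ω) 0 := by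
  unfold phi
  split_ifs with h1 h2 h3
  · apply le_max_of_le_left
    have := le_max_right (x + V ω) (σ ω + D ω + V ω)
    have hv := hV0 ω
    linarith
  · apply max_le_max _ le_rfl
    have := le_max_right (x + V ω) (σ ω + D ω + V ω)
    have hv := hV0 ω
    linarith
  · apply le_max_of_le_left
    have := le_max_left (x + V ω) (σ ω + D ω + V ω)
    have hv := hV0 ω
    linarith
  · exact le_max_right _ _

/-- Key pathwise bound: along any backward trajectory of a stationary solution,
on the event where all the `S_j` are nonpositive, the solution is dominated. -/
lemma keyA {_ : MeasurableSpace Ω} (θ : Ω ≃ᵐ Ω) (σ D V τ : Ω → ℝ)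
    (hσ0 : ∀ ω, 0 ≤ σ ω) (hD0 : ∀ ω, 0 ≤ D ω) (hV0 : ∀ ω, 0 ≤ V ω)
    (X : Ω → ℝ) (ω : Ω)
    (hsol : ∀ k : ℕ, X ((⇑θ.symm)^[k] ω)
      = phi σ D V τ (X ((⇑θ.symm)^[k+1] ω)) ((⇑θ.symm)^[k+1] ω))
    (hS : ∀ j : ℕ, Sj (⇑θ.symm) σ D V τ (j + 1) ω ≤ 0) :
    ∀ n : ℕ, X ω ≤ max 0 (X ((⇑θ.symm)^[n] ω) +
      ∑ i ∈ Finset.Icc 1 n, (V ((⇑θ.symm)^[i] ω) - τ ((⇑θ.symm)^[i] ω))) := by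
  set T : Ω → Ω := ⇑θ.symm with hT
  set G : ℕ → ℝ := fun n => ∑ i ∈ Finset.Icc 1 n, (V (T^[i] ω) - τ (T^[i] ω)) with hG
  have hGle : ∀ n, G n ≤ 0 := by
    intro n
    cases n with
    | zero => simp [hG]
    | succ m =>
        have hs := hS m
        have hsplit : Sj T σ D V τ (m+1) ω
            = σ (T^[m+1] ω) + D (T^[m+1] ω) + G (m+1) := by
          simp only [Sj, hG, Finset.sum_sub_distrib]
          ring
        have h1 := hσ0 (T^[m+1] ω)
        have h2 := hD0 (T^[m+1] ω)
        linarith [hsplit ▸ hs]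
  have hGsucc : ∀ n, G (n+1) = G n + (V (T^[n+1] ω) - τ (T^[n+1] ω)) := by
    intro n
    simp only [hG]
    rw [Finset.sum_Icc_succ_top (by omega : 1 ≤ n + 1)]
  have hSsucc : ∀ n, Sj T σ D V τ (n+1) ω
      = σ (T^[n+1] ω) + D (T^[n+1] ω) + G n + (V (T^[n+1] ω) - τ (T^[n+1] ω)) := by
    intro n
    simp only [Sj, hG, Finset.sum_sub_distrib]
    rw [Finset.sum_Icc_succ_top (by omega : 1 ≤ n + 1),
        Finset.sum_Icc_succ_top (by omega : 1 ≤ n + 1)]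
    ring
  intro n
  induction n with
  | zero =>
      simp only [Function.iterate_zero, id_eq, Finset.Icc_self]
      simp
  | succ n ih =>
      refine le_trans ih (max_le (le_max_left _ _) ?_)
      set ω' : Ω := T^[n+1] ω with hω'
      set a : ℝ := X (T^[n+1] ω) with ha
      have hx : X (T^[n] ω) ≤ max (max (a + V ω') (σ ω' + D ω' + V ω') - τ ω') 0 := by
        rw [hsol n]
        exact phi_le_psi_s12 σ D V τ hV0 (X (T^[n+1] ω)) (T^[n+1] ω)
      have hgoal : X (T^[n] ω) + G n ≤ max 0 (a + G (n+1)) := by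
        rcases le_total (max (a + V ω') (σ ω' + D ω' + V ω') - τ ω') 0 with h | h
        · rw [max_eq_right h] at hx
          have := le_max_left (0:ℝ) (a + G (n+1))
          linarith [hGle n]
        · rw [max_eq_left h] at hx
          rcases le_total (a + V ω') (σ ω' + D ω' + V ω') with h3 | h3
          · rw [max_eq_right h3] at hx
            have hs := hS n
            rw [hSsucc n] at hs
            have := le_max_left (0:ℝ) (a + G (n+1))
            linarith
          · rw [max_eq_left h3] at hx
            have h4 : a + G n + (V ω' - τ ω') = a + G (n+1) := by rw [hGsucc n]; ring
            calc X (T^[n] ω) + G n ≤ a + G n + (V ω' - τ ω') := by linarith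
              _ = a + G (n+1) := h4
              _ ≤ max 0 (a + G (n+1)) := le_max_right _ _
      exact hgoal

lemma sum_range_shift (g : ℕ → ℝ) : ∀ n : ℕ, ∑ k ∈ Finset.range n, g (k + 1) = ∑ i ∈ Finset.Icc 1 n, g i := by
  intro n
  induction n with
  | zero => simp
  | succ n ih =>
      rw [Finset.sum_range_succ, Finset.sum_Icc_succ_top (by omega : 1 ≤ n + 1), ih]

lemma exists_level {_ : MeasurableSpace Ω} {P : Measure Ω} [IsProbabilityMeasure P]
    (Y : Ω → ℝ) (hY : Measurable Y) : ∃ c : ℕ, 0 < P {ω | Y ω ≤ c} := by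
  by_contra h
  push_neg at h
  have h0 : ∀ c : ℕ, P {ω | Y ω ≤ c} = 0 := fun c => le_antisymm (h c) (zero_le)
  have huniv : (⋃ c : ℕ, {ω : Ω | Y ω ≤ c}) = Set.univ := by
    ext ω
    simp only [Set.mem_iUnion, Set.mem_setOf_eq, Set.mem_univ, iff_true]
    exact exists_nat_ge (Y ω)
  have : P Set.univ = 0 := by
    rw [← huniv]
    exact measure_iUnion_null fun c => h0 c
  simp [measure_univ] at this

/-- Theorem 3.1, uniqueness: under E[V − τ] < 0 and
P(sup_{j≥1} S_j ≤ 0) > 0, any two stationary solutions of X ∘ θ = φ(X, ·) coincide a.s. -/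
theorem stationary_uniqueness
    [MeasurableSpace Ω] (P : Measure Ω) [IsProbabilityMeasure P]
    (θ : Ω ≃ᵐ Ω) (herg : Ergodic (⇑θ) P)
    (σ D V τ : Ω → ℝ)
    (hσm : Measurable σ) (hDm : Measurable D) (hVm : Measurable V) (hτm : Measurable τ)
    (hσ0 : ∀ ω, 0 ≤ σ ω) (hD0 : ∀ ω, 0 ≤ D ω) (hV0 : ∀ ω, 0 ≤ V ω) (hτ0 : ∀ ω, 0 ≤ τ ω)
    (hσi : Integrable σ P) (hDi : Integrable D P) (hVi : Integrable V P) (hτi : Integrable τ P)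
    (hτpos : ∀ᵐ ω ∂P, 0 < τ ω)
    (hEV : ∫ ω, (V ω - τ ω) ∂P < 0)
    (hsup : 0 < P {ω : Ω | ∀ j : ℕ, Sj (⇑θ.symm) σ D V τ (j + 1) ω ≤ 0})
    (X Xp : Ω → ℝ) (hXm : Measurable X) (hXpm : Measurable Xp)
    (hX0 : ∀ ω, 0 ≤ X ω) (hXp0 : ∀ ω, 0 ≤ Xp ω)
    (hXsol : ∀ᵐ ω ∂P, X (θ ω) = phi σ D V τ (X ω) ω)
    (hXpsol : ∀ᵐ ω ∂P, Xp (θ ω) = phi σ D V τ (Xp ω) ω) :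
    X =ᵐ[P] Xp := by
  set T : Ω → Ω := ⇑θ.symm with hTdef
  have hTm : Measurable T := θ.symm.measurable
  have hTmp : MeasurePreserving T P P := (herg.toMeasurePreserving).symm θ
  -- ergodicity of the inverse map
  have hTerg : Ergodic T P := by
    refine ⟨hTmp, ⟨fun s hs hinv => ?_⟩⟩
    rw [Filter.eventuallyConst_set']
    apply herg.ae_empty_or_univ hs
    have h1 : (⇑θ) ⁻¹' (T ⁻¹' s) = s := by
      rw [← Set.preimage_comp]
      have h2 : T ∘ ⇑θ = id := by
        ext ω; simp [hTdef]
      rw [h2, Set.preimage_id]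
    rw [← hinv, h1, hinv]
  set f : Ω → ℝ := fun ω => V ω - τ ω with hf
  have hfm : Measurable f := hVm.sub hτm
  have hfi : Integrable f P := hVi.sub hτi
  -- a.e. divergence of backward sums
  have hdiv : ∀ᵐ ω ∂P, Tendsto (fun n => birkhoffSum T f n ω) atTop atBot :=
    birkhoffSum_tendsto_atBot hTm hTerg hfm hfi hEV
  have hdiv' : ∀ᵐ ω ∂P,
      Tendsto (fun n => ∑ i ∈ Finset.Icc 1 n, (V (T^[i] ω) - τ (T^[i] ω))) atTop atBot := by
    have h2 := hTmp.quasiMeasurePreserving.ae hdiv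
    filter_upwards [h2] with ω hω
    apply hω.congr
    intro n
    rw [birkhoffSum]
    rw [← sum_range_shift (fun i => V (T^[i] ω) - τ (T^[i] ω)) n]
    apply Finset.sum_congr rfl
    intro i _
    rw [Function.iterate_succ_apply]
  -- choose a common level c
  obtain ⟨c1, hc1⟩ := exists_level (P := P) X hXm
  obtain ⟨c2, hc2⟩ := exists_level (P := P) Xp hXpm
  set c : ℝ := max (c1 : ℝ) (c2 : ℝ) with hc
  have hcX : 0 < P {ω | X ω ≤ c} := by
    refine lt_of_lt_of_le hc1 (measure_mono ?_)
    intro ω hω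
    simp only [Set.mem_setOf_eq] at *
    exact le_trans hω (le_max_left _ _)
  have hcXp : 0 < P {ω | Xp ω ≤ c} := by
    refine lt_of_lt_of_le hc2 (measure_mono ?_)
    intro ω hω
    simp only [Set.mem_setOf_eq] at *
    exact le_trans hω (le_max_right _ _)
  have hfreqX : ∀ᵐ ω ∂P, ∃ᶠ n in atTop, X (T^[n] ω) ≤ c := by
    have := freq_visit θ herg (measurableSet_le hXm measurable_const) hcX
    filter_upwards [this] with ω hω
    exact hω
  have hfreqXp : ∀ᵐ ω ∂P, ∃ᶠ n in atTop, Xp (T^[n] ω) ≤ c := by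
    have := freq_visit θ herg (measurableSet_le hXpm measurable_const) hcXp
    filter_upwards [this] with ω hω
    exact hω
  -- the solution equations along backward orbits
  have hXsolk : ∀ᵐ ω ∂P, ∀ k : ℕ,
      X (T^[k] ω) = phi σ D V τ (X (T^[k+1] ω)) (T^[k+1] ω) := by
    rw [ae_all_iff]
    intro k
    have h1 := (hTmp.iterate (k+1)).quasiMeasurePreserving.ae hXsol
    filter_upwards [h1] with ω hω
    have heq : θ (T^[k+1] ω) = T^[k] ω := by
      rw [Function.iterate_succ_apply']
      simp [hTdef]
    rwa [heq] at hω
  have hXpsolk : ∀ᵐ ω ∂P, ∀ k : ℕ,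
      Xp (T^[k] ω) = phi σ D V τ (Xp (T^[k+1] ω)) (T^[k+1] ω) := by
    rw [ae_all_iff]
    intro k
    have h1 := (hTmp.iterate (k+1)).quasiMeasurePreserving.ae hXpsol
    filter_upwards [h1] with ω hω
    have heq : θ (T^[k+1] ω) = T^[k] ω := by
      rw [Function.iterate_succ_apply']
      simp [hTdef]
    rwa [heq] at hω
  -- a.e. on B, both vanish
  set B : Set Ω := {ω : Ω | ∀ j : ℕ, Sj T σ D V τ (j + 1) ω ≤ 0} with hB
  have hzero : ∀ᵐ ω ∂P, ω ∈ B → X ω = 0 ∧ Xp ω = 0 := by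
    filter_upwards [hdiv', hfreqX, hfreqXp, hXsolk, hXpsolk] with ω hdω hfX hfXp hsX hsXp hωB
    have hSω : ∀ j : ℕ, Sj T σ D V τ (j + 1) ω ≤ 0 := hωB
    have hkeyX := keyA θ σ D V τ hσ0 hD0 hV0 X ω hsX hSω
    have hkeyXp := keyA θ σ D V τ hσ0 hD0 hV0 Xp ω hsXp hSω
    have hGsmall : ∀ᶠ n in atTop,
        (∑ i ∈ Finset.Icc 1 n, (V (T^[i] ω) - τ (T^[i] ω))) ≤ -c := by
      exact (tendsto_atBot.mp hdω) (-c)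
    constructor
    · have hcomb := hfX.and_eventually hGsmall
      obtain ⟨n, hn1, hn2⟩ := hcomb.exists
      have := hkeyX n
      have hle : X (T^[n] ω) + ∑ i ∈ Finset.Icc 1 n, (V (T^[i] ω) - τ (T^[i] ω)) ≤ 0 := by
        linarith
      refine le_antisymm ?_ (hX0 ω)
      calc X ω ≤ max 0 _ := this
        _ ≤ 0 := max_le le_rfl hle
    · have hcomb := hfXp.and_eventually hGsmall
      obtain ⟨n, hn1, hn2⟩ := hcomb.exists
      have := hkeyXp n
      have hle : Xp (T^[n] ω) + ∑ i ∈ Finset.Icc 1 n, (V (T^[i] ω) - τ (T^[i] ω)) ≤ 0 := by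
        linarith
      refine le_antisymm ?_ (hXp0 ω)
      calc Xp ω ≤ max 0 _ := this
        _ ≤ 0 := max_le le_rfl hle
  -- the agreement set
  set E : Set Ω := {ω | X ω = Xp ω} with hE
  have hEm : MeasurableSet E := measurableSet_eq_fun hXm hXpm
  have hEpos : 0 < P E := by
    have h1 : P {ω | ¬ (ω ∈ B → X ω = 0 ∧ Xp ω = 0)} = 0 := by
      rw [ae_iff] at hzero; exact hzero
    have hBsub : B ⊆ E ∪ {ω | ¬ (ω ∈ B → X ω = 0 ∧ Xp ω = 0)} := by
      intro ω hω
      by_cases h' : X ω = 0 ∧ Xp ω = 0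
      · exact Or.inl (by simp only [hE, Set.mem_setOf_eq]; rw [h'.1, h'.2])
      · exact Or.inr (by simp only [Set.mem_setOf_eq]; intro hc; exact h' (hc hω))
    have : P B ≤ P E + 0 := by
      rw [← h1]
      exact le_trans (measure_mono hBsub) (measure_union_le _ _)
    rw [add_zero] at this
    exact lt_of_lt_of_le hsup this
  -- E is almost invariant
  have hEle : E ≤ᵐ[P] (⇑θ) ⁻¹' E := by
    filter_upwards [hXsol, hXpsol] with ω h1 h2 hω
    have hXeq : X ω = Xp ω := hω
    show X (θ ω) = Xp (θ ω)
    rw [h1, h2, hXeq]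
  rcases herg.ae_empty_or_univ_of_ae_le_preimage hEm.nullMeasurableSet hEle with h | h
  · exfalso
    have : P E = 0 := by
      have := measure_congr h
      simpa using this
    exact absurd this (ne_of_gt hEpos)
  · rw [ae_eq_univ] at h
    rw [Filter.EventuallyEq, ae_iff]
    apply le_antisymm _ (zero_le)
    refine le_trans (measure_mono ?_) (le_of_eq h)
    intro ω hω
    exact hω
end
end
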